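/- Identify ℝ³ with the pure imaginary quaternions. Let a₀,…,a_N be distinct pure imaginary quaternions, λ₀,…,λ_N > 0, μ > 0, and let x be pure imaginary with x ≠ aᵢ for all i. With ζ(x) = Σᵢ λᵢ²(x − aᵢ)/‖x − aᵢ‖², Ψ(μ)(x) = Σᵢ,ⱼ λᵢ²λⱼ² (x − aᵢ + μ)·conj(x − aⱼ + μ)·(x − aⱼ)/(‖x − aᵢ + μ‖²‖x − aⱼ + μ‖²‖x − aⱼ‖²), and Ξ(μ)(x) = Σᵢ,ⱼ μλᵢ²λⱼ²(aⱼ − aᵢ)·(x − aⱼ)/(‖x − aᵢ + μ‖²‖x − aⱼ + μ‖²‖x − aⱼ‖²), the imaginary part of Ψ(μ)(x)·conj(ζ(x)), regarded as a vector in ℝ³, equals −Re(Ξ(μ)(x))·ζ(x) − Im(Ξ(μ)(x)) × ζ(x), where × is the cross product on ℝ³ and ζ(x), Im(Ξ(μ)(x)) are regarded as vectors in ℝ³. -/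

import Mathlib

/-- The vector in `ℝ³` formed by the imaginary part of a quaternion. -/
def imVec (q : Quaternion ℝ) : Fin 3 → ℝ := ![q.imI, q.imJ, q.imK]

/-- The JNR function `ζ(x) = Σᵢ λᵢ² (x − aᵢ)/‖x − aᵢ‖²`, quaternion-valued. -/
noncomputable def jnrZeta (N : ℕ) (a : Fin (N + 1) → Quaternion ℝ)
    (lam : Fin (N + 1) → ℝ) (x : Quaternion ℝ) : Quaternion ℝ :=
  ∑ i, ((lam i) ^ 2 / ‖x - a i‖ ^ 2) • (x - a i)

/-- `Ψ(μ)(x) = Σᵢⱼ λᵢ²λⱼ² (x − aᵢ + μ)·conj(x − aⱼ + μ)·(x − aⱼ)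
/(‖x − aᵢ + μ‖²‖x − aⱼ + μ‖²‖x − aⱼ‖²)`, with quaternion products. -/
noncomputable def jnrPsi (N : ℕ) (a : Fin (N + 1) → Quaternion ℝ)
    (lam : Fin (N + 1) → ℝ) (μ : ℝ) (x : Quaternion ℝ) : Quaternion ℝ :=
  ∑ i, ∑ j,
    ((lam i) ^ 2 * (lam j) ^ 2 /
        (‖x - a i + (μ : Quaternion ℝ)‖ ^ 2 * ‖x - a j + (μ : Quaternion ℝ)‖ ^ 2 *
          ‖x - a j‖ ^ 2)) •
      ((x - a i + (μ : Quaternion ℝ)) * star (x - a j + (μ : Quaternion ℝ)) * (x - a j))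

/-- `Ξ(μ)(x) = Σᵢⱼ μλᵢ²λⱼ² (aⱼ − aᵢ)·(x − aⱼ)/(‖x − aᵢ + μ‖²‖x − aⱼ + μ‖²‖x − aⱼ‖²)`. -/
noncomputable def jnrXi (N : ℕ) (a : Fin (N + 1) → Quaternion ℝ)
    (lam : Fin (N + 1) → ℝ) (μ : ℝ) (x : Quaternion ℝ) : Quaternion ℝ :=
  ∑ i, ∑ j,
    (μ * (lam i) ^ 2 * (lam j) ^ 2 /
        (‖x - a i + (μ : Quaternion ℝ)‖ ^ 2 * ‖x - a j + (μ : Quaternion ℝ)‖ ^ 2 *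
          ‖x - a j‖ ^ 2)) •
      ((a j - a i) * (x - a j))


open Quaternion in
lemma sq_norm_q (q : Quaternion ℝ) : ‖q‖ ^ 2 = normSq q := by
  rw [sq, ← normSq_eq_norm_mul_self]

open Quaternion in
lemma key_alg (u v : Quaternion ℝ) (hu : u.re = 0) (hv : v.re = 0) (μ : ℝ) :
    (u + (μ : Quaternion ℝ)) * star (v + (μ : Quaternion ℝ)) * v
      = (‖v‖ ^ 2) • u + (μ ^ 2) • v + μ • ((u - v) * v) := by
  have hn : ‖v‖ ^ 2 = v.imI ^ 2 + v.imJ ^ 2 + v.imK ^ 2 := by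
    rw [sq_norm_q, normSq_def', hv]; ring
  ext <;>
    simp [Quaternion.re_mul, Quaternion.imI_mul, Quaternion.imJ_mul, Quaternion.imK_mul,
      hn, hu, hv] <;> ring

open Quaternion in
lemma norm_add_coe (q : Quaternion ℝ) (hq : q.re = 0) (μ : ℝ) :
    ‖q + (μ : Quaternion ℝ)‖ ^ 2 = ‖q‖ ^ 2 + μ ^ 2 := by
  rw [sq_norm_q, sq_norm_q, normSq_def', normSq_def']
  simp [hq]; ring

lemma psi_structure (N : ℕ) (a : Fin (N + 1) → Quaternion ℝ) (ha_im : ∀ i, (a i).re = 0)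
    (lam : Fin (N + 1) → ℝ) (μ : ℝ) (hμ : 0 < μ)
    (x : Quaternion ℝ) (hx_im : x.re = 0) (hx : ∀ i, x ≠ a i) :
    jnrPsi N a lam μ x
      = (∑ i, (lam i) ^ 2 / ‖x - a i + (μ : Quaternion ℝ)‖ ^ 2) • jnrZeta N a lam x
        + jnrXi N a lam μ x := by
  have hbre : ∀ i, (x - a i).re = 0 := fun i => by simp [hx_im, ha_im]
  have hB : ∀ i, ‖x - a i‖ ^ 2 ≠ 0 := fun i => by
    simp only [ne_eq, pow_eq_zero_iff, norm_eq_zero, sub_eq_zero, OfNat.ofNat_ne_zero,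
      not_false_eq_true, and_true]
    exact hx i
  have hCeq : ∀ i, ‖x - a i + (μ : Quaternion ℝ)‖ ^ 2 = ‖x - a i‖ ^ 2 + μ ^ 2 :=
    fun i => norm_add_coe (x - a i) (hbre i) μ
  have hC' : ∀ i, ‖x - a i‖ ^ 2 + μ ^ 2 ≠ 0 := fun i => by positivity
  have step1 : jnrPsi N a lam μ x
      = (∑ i, ∑ j, ((lam i ^ 2 * lam j ^ 2 /
            (‖x - a i + (μ : Quaternion ℝ)‖ ^ 2 * ‖x - a j + (μ : Quaternion ℝ)‖ ^ 2
              * ‖x - a j‖ ^ 2) * ‖x - a j‖ ^ 2) • (x - a i)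
          + (lam i ^ 2 * lam j ^ 2 /
            (‖x - a i + (μ : Quaternion ℝ)‖ ^ 2 * ‖x - a j + (μ : Quaternion ℝ)‖ ^ 2
              * ‖x - a j‖ ^ 2) * μ ^ 2) • (x - a j)))
        + jnrXi N a lam μ x := by
    rw [jnrPsi, jnrXi, ← Finset.sum_add_distrib]
    refine Finset.sum_congr rfl fun i _ => ?_
    rw [← Finset.sum_add_distrib]
    refine Finset.sum_congr rfl fun j _ => ?_
    show _ = _ + _ + _
    rw [key_alg (x - a i) (x - a j) (hbre i) (hbre j) μ]
    have hab : (a j - a i) = (x - a i) - (x - a j) := by abel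
    rw [hab]
    simp only [smul_add, smul_smul]
    ring_nf
  rw [step1]
  congr 1
  have h1 : (∑ i, ∑ j, ((lam i ^ 2 * lam j ^ 2 /
            (‖x - a i + (μ : Quaternion ℝ)‖ ^ 2 * ‖x - a j + (μ : Quaternion ℝ)‖ ^ 2
              * ‖x - a j‖ ^ 2) * ‖x - a j‖ ^ 2) • (x - a i)
          + (lam i ^ 2 * lam j ^ 2 /
            (‖x - a i + (μ : Quaternion ℝ)‖ ^ 2 * ‖x - a j + (μ : Quaternion ℝ)‖ ^ 2
              * ‖x - a j‖ ^ 2) * μ ^ 2) • (x - a j)))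
      = ∑ i, ∑ j, ((lam j ^ 2 * lam i ^ 2 /
            (‖x - a j + (μ : Quaternion ℝ)‖ ^ 2 * ‖x - a i + (μ : Quaternion ℝ)‖ ^ 2
              * ‖x - a i‖ ^ 2) * ‖x - a i‖ ^ 2)
          + (lam i ^ 2 * lam j ^ 2 /
            (‖x - a i + (μ : Quaternion ℝ)‖ ^ 2 * ‖x - a j + (μ : Quaternion ℝ)‖ ^ 2
              * ‖x - a j‖ ^ 2) * μ ^ 2)) • (x - a j) := by
    simp only [Finset.sum_add_distrib, add_smul]
    congr 1
    exact Finset.sum_comm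
  rw [h1]
  rw [jnrZeta, Finset.smul_sum]
  simp only [smul_smul, Finset.sum_mul, Finset.sum_smul]
  rw [Finset.sum_comm]
  refine Finset.sum_congr rfl fun i _ => Finset.sum_congr rfl fun j _ => ?_
  congr 1
  rw [hCeq i, hCeq j]
  field_simp [hB i, hB j, hC' i, hC' j, norm_ne_zero_iff.mpr (sub_ne_zero.mpr (hx i)),
      norm_ne_zero_iff.mpr (sub_ne_zero.mpr (hx j))]

lemma re_sum' {ι : Type*} (s : Finset ι) (f : ι → Quaternion ℝ) :
    (∑ i ∈ s, f i).re = ∑ i ∈ s, (f i).re :=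
  map_sum (QuaternionAlgebra.reₗ (R := ℝ) (c₁ := -1) (c₂ := 0) (c₃ := -1)) f s

/-- For distinct pure imaginary poles `aᵢ`, weights `λᵢ > 0`, `μ > 0`,
and pure imaginary `x` away from the poles, the imaginary part of `Ψ(μ)(x)·conj(ζ(x))`,
regarded as a vector in `ℝ³`, equals `−Re(Ξ(μ)(x))·ζ(x) − Im(Ξ(μ)(x)) × ζ(x)`. -/
theorem jnr_im_Psi_conj_zeta (N : ℕ)
    (a : Fin (N + 1) → Quaternion ℝ) (ha_im : ∀ i, (a i).re = 0)
    (ha : Function.Injective a)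
    (lam : Fin (N + 1) → ℝ) (hlam : ∀ i, 0 < lam i)
    (μ : ℝ) (hμ : 0 < μ)
    (x : Quaternion ℝ) (hx_im : x.re = 0) (hx : ∀ i, x ≠ a i) :
    imVec (jnrPsi N a lam μ x * star (jnrZeta N a lam x))
      = -((jnrXi N a lam μ x).re • imVec (jnrZeta N a lam x))
        - crossProduct (imVec (jnrXi N a lam μ x)) (imVec (jnrZeta N a lam x)) := by
  have hζre : (jnrZeta N a lam x).re = 0 := by
    rw [jnrZeta, re_sum']
    refine Finset.sum_eq_zero fun i _ => ?_
    simp [hx_im, ha_im]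
  rw [psi_structure N a ha_im lam μ hμ x hx_im hx]
  set K := ∑ i, (lam i) ^ 2 / ‖x - a i + (μ : Quaternion ℝ)‖ ^ 2 with hK
  set ζ := jnrZeta N a lam x with hζ
  set Ξ := jnrXi N a lam μ x with hΞ
  funext k
  fin_cases k <;>
    simp [imVec, crossProduct, Quaternion.imI_mul, Quaternion.imJ_mul, Quaternion.imK_mul,
      hζre] <;> ring
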